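/- For m = 3, define α(k) = -4(n+3)k^{10} + 32(n+1)k⁸·log(k) - 4(n-3)k⁸ + 32(n-1)k²·log(k) + 4(n+3)k² + 4(n-3) for k ≥ 1, where n ≥ 1 is real. Then α(1) = α'(1) = α''(1) = 0, α'''(1) = 512n > 0, and α(k) → -∞ as k → ∞; consequently there exists k̃ > 1 with α(k) > 0 for 1 < k < k̃ and α(k̃) = 0. -/

import Mathlib

open Real Filter Set

noncomputable def F1aux (n x : ℝ) : ℝ :=
  -40 * (n + 3) * x ^ 9 + 256 * (n + 1) * x ^ 7 * Real.log x + 128 * x ^ 7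
    + 64 * (n - 1) * x * Real.log x + (40 * n - 8) * x

noncomputable def F2aux (n x : ℝ) : ℝ :=
  -360 * (n + 3) * x ^ 8 + 1792 * (n + 1) * x ^ 6 * Real.log x + (256 * n + 1152) * x ^ 6
    + 64 * (n - 1) * Real.log x + 104 * n - 72

noncomputable def F3aux (n x : ℝ) : ℝ :=
  -2880 * (n + 3) * x ^ 7 + 10752 * (n + 1) * x ^ 5 * Real.log x + (3328 * n + 8704) * x ^ 5
    + 64 * (n - 1) / x

lemma hdAaux (n : ℝ) {x : ℝ} (hx : 0 < x) :
    HasDerivAt (fun k => -4 * (n + 3) * k ^ 10 + 32 * (n + 1) * k ^ 8 * Real.log k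
        - 4 * (n - 3) * k ^ 8 + 32 * (n - 1) * k ^ 2 * Real.log k
        + 4 * (n + 3) * k ^ 2 + 4 * (n - 3)) (F1aux n x) x := by
  have hx0 : x ≠ 0 := hx.ne'
  have hl : HasDerivAt Real.log x⁻¹ x := Real.hasDerivAt_log hx0
  have h10 : HasDerivAt (fun k : ℝ => k ^ 10) (10 * x ^ 9) x := by
    simpa using hasDerivAt_pow 10 x
  have h8 : HasDerivAt (fun k : ℝ => k ^ 8) (8 * x ^ 7) x := by
    simpa using hasDerivAt_pow 8 x
  have h2 : HasDerivAt (fun k : ℝ => k ^ 2) (2 * x) x := by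
    simpa using hasDerivAt_pow 2 x
  have H := (((((h10.const_mul (-4 * (n + 3))).add
      ((h8.const_mul (32 * (n + 1))).mul hl)).sub
      (h8.const_mul (4 * (n - 3)))).add
      ((h2.const_mul (32 * (n - 1))).mul hl)).add
      (h2.const_mul (4 * (n + 3)))).add_const (4 * (n - 3))
  convert H using 1
  · rfl
  · rfl
  · rfl
  unfold F1aux
  field_simp
  ring

lemma hdF1aux (n : ℝ) {x : ℝ} (hx : 0 < x) :
    HasDerivAt (F1aux n) (F2aux n x) x := by
  have hx0 : x ≠ 0 := hx.ne'
  have hl : HasDerivAt Real.log x⁻¹ x := Real.hasDerivAt_log hx0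
  have h9 : HasDerivAt (fun k : ℝ => k ^ 9) (9 * x ^ 8) x := by
    simpa using hasDerivAt_pow 9 x
  have h7 : HasDerivAt (fun k : ℝ => k ^ 7) (7 * x ^ 6) x := by
    simpa using hasDerivAt_pow 7 x
  have hid : HasDerivAt (fun k : ℝ => k) 1 x := hasDerivAt_id x
  have H := ((((h9.const_mul (-40 * (n + 3))).add
      ((h7.const_mul (256 * (n + 1))).mul hl)).add
      (h7.const_mul 128)).add
      (((hid.const_mul (64 * (n - 1))).mul hl))).add
      (hid.const_mul (40 * n - 8))
  convert H using 1
  · rfl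
  · rfl
  · rfl
  unfold F2aux
  field_simp
  ring

lemma hdF2aux (n : ℝ) {x : ℝ} (hx : 0 < x) :
    HasDerivAt (F2aux n) (F3aux n x) x := by
  have hx0 : x ≠ 0 := hx.ne'
  have hl : HasDerivAt Real.log x⁻¹ x := Real.hasDerivAt_log hx0
  have h8 : HasDerivAt (fun k : ℝ => k ^ 8) (8 * x ^ 7) x := by
    simpa using hasDerivAt_pow 8 x
  have h6 : HasDerivAt (fun k : ℝ => k ^ 6) (6 * x ^ 5) x := by
    simpa using hasDerivAt_pow 6 x
  have H := (((((h8.const_mul (-360 * (n + 3))).add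
      ((h6.const_mul (1792 * (n + 1))).mul hl)).add
      (h6.const_mul (256 * n + 1152))).add
      (hl.const_mul (64 * (n - 1)))).add_const (104 * n)).sub_const 72
  convert H using 1
  · rfl
  · rfl
  · rfl
  unfold F3aux
  field_simp
  ring

/-- Boundary-matching function for `m = 3`: `α` vanishes to third order at `k = 1` with
positive third derivative, tends to `-∞`, hence has a first zero `k̃ > 1` with `α > 0`
on `(1, k̃)`. -/
theorem stmt_12 (n : ℝ) (hn : 1 ≤ n) (α : ℝ → ℝ)
    (hα : α = fun k => -4 * (n + 3) * k ^ 10 + 32 * (n + 1) * k ^ 8 * Real.log k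
        - 4 * (n - 3) * k ^ 8 + 32 * (n - 1) * k ^ 2 * Real.log k
        + 4 * (n + 3) * k ^ 2 + 4 * (n - 3)) :
    α 1 = 0 ∧ deriv α 1 = 0 ∧ deriv (deriv α) 1 = 0 ∧
    deriv (deriv (deriv α)) 1 = 512 * n ∧ 0 < 512 * n ∧
    Filter.Tendsto α Filter.atTop Filter.atBot ∧
    ∃ ktilde : ℝ, 1 < ktilde ∧ (∀ k : ℝ, 1 < k → k < ktilde → 0 < α k) ∧
      α ktilde = 0 := by
  have hdA : ∀ x : ℝ, 0 < x → HasDerivAt α (F1aux n x) x := by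
    intro x hx; rw [hα]; exact hdAaux n hx
  -- values at 1
  have hα1 : α 1 = 0 := by rw [hα]; simp [Real.log_one]; ring
  have hF11 : F1aux n 1 = 0 := by unfold F1aux; simp [Real.log_one]; ring
  have hF21 : F2aux n 1 = 0 := by unfold F2aux; simp [Real.log_one]; ring
  have hF31 : F3aux n 1 = 512 * n := by unfold F3aux; simp [Real.log_one]; ring
  -- derivatives at 1
  have hd1 : deriv α 1 = 0 := by rw [(hdA 1 one_pos).deriv]; exact hF11
  have hev1 : ∀ᶠ x in nhds 1, deriv α x = F1aux n x := by
    filter_upwards [Ioi_mem_nhds (one_pos : (0:ℝ) < 1)] with x hx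
    exact (hdA x hx).deriv
  have hd2 : deriv (deriv α) 1 = 0 := by
    have hev1' : deriv α =ᶠ[nhds 1] F1aux n := hev1
    rw [hev1'.deriv_eq, (hdF1aux n one_pos).deriv]
    exact hF21
  have hev2 : ∀ᶠ x in nhds 1, deriv (deriv α) x = F2aux n x := by
    filter_upwards [Ioi_mem_nhds (one_pos : (0:ℝ) < 1)] with x hx
    have h : deriv α =ᶠ[nhds x] F1aux n := by
      filter_upwards [Ioi_mem_nhds hx] with y hy using (hdA y hy).deriv
    rw [h.deriv_eq, (hdF1aux n hx).deriv]
  have hd3 : deriv (deriv (deriv α)) 1 = 512 * n := by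
    have hev2' : deriv (deriv α) =ᶠ[nhds 1] F2aux n := hev2
    rw [hev2'.deriv_eq, (hdF2aux n one_pos).deriv]
    exact hF31
  have hpos : 0 < 512 * n := by linarith
  -- tendsto atBot
  have hC : -4 * (n + 3) < 0 := by linarith
  have hlk : Tendsto (fun k : ℝ => Real.log k / k) atTop (nhds 0) := by
    simpa using Real.tendsto_pow_log_div_mul_add_atTop 1 0 1 one_ne_zero
  have hinv : ∀ j : ℕ, 1 ≤ j → Tendsto (fun k : ℝ => (k ^ j)⁻¹) atTop (nhds 0) := by
    intro j hj
    exact tendsto_inv_atTop_zero.comp (tendsto_pow_atTop (by omega))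
  have hg : Tendsto (fun k : ℝ => -4 * (n + 3)
      + 32 * (n + 1) * (Real.log k / k) * (k ^ 1)⁻¹ - 4 * (n - 3) * (k ^ 2)⁻¹
      + 32 * (n - 1) * (Real.log k / k) * (k ^ 7)⁻¹ + 4 * (n + 3) * (k ^ 8)⁻¹
      + 4 * (n - 3) * (k ^ 10)⁻¹) atTop (nhds (-4 * (n + 3))) := by
    have h1 := ((hlk.const_mul (32 * (n + 1))).mul (hinv 1 le_rfl))
    have h2 := (hinv 2 (by norm_num)).const_mul (4 * (n - 3))
    have h3 := ((hlk.const_mul (32 * (n - 1))).mul (hinv 7 (by norm_num)))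
    have h4 := (hinv 8 (by norm_num)).const_mul (4 * (n + 3))
    have h5 := (hinv 10 (by norm_num)).const_mul (4 * (n - 3))
    have := ((((((tendsto_const_nhds (x := -4 * (n + 3)) (f := atTop)).add h1).sub
        h2).add h3).add h4).add h5)
    simpa using this
  have htop : Tendsto (fun k : ℝ => k ^ 10) atTop atTop := tendsto_pow_atTop (by norm_num)
  have hbot : Tendsto α atTop atBot := by
    refine (htop.atTop_mul_neg hC hg).congr' ?_
    filter_upwards [eventually_gt_atTop (0 : ℝ)] with k hk
    have hk0 : k ≠ 0 := hk.ne'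
    rw [hα]
    field_simp
  -- positivity of F3aux near 1
  have hcF3 : ContinuousAt (F3aux n) 1 := by
    unfold F3aux
    have hlc : ContinuousAt Real.log 1 := Real.continuousAt_log one_ne_zero
    fun_prop (disch := norm_num)
  have hF3pos : ∀ᶠ x in nhds 1, 0 < F3aux n x := by
    have h0 : (0 : ℝ) < F3aux n 1 := by rw [hF31]; linarith
    exact hcF3.eventually (eventually_gt_nhds h0)
  obtain ⟨ε, hε, hball⟩ := Metric.eventually_nhds_iff.mp hF3pos
  set b : ℝ := 1 + ε / 2 with hbdef
  have hb1 : (1 : ℝ) < b := by simp [hbdef]; linarith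
  have hbpos : ∀ x ∈ Icc (1 : ℝ) b, 0 < x := fun x hx => lt_of_lt_of_le one_pos hx.1
  have hIoopos : ∀ x ∈ Ioo (1 : ℝ) b, 0 < F3aux n x := by
    intro x hx
    apply hball
    rw [Real.dist_eq, abs_of_nonneg (by linarith [hx.1])]
    have := hx.2
    simp only [hbdef] at this
    linarith
  -- strict monotonicity chain on [1, b]
  have hmono2 : StrictMonoOn (F2aux n) (Icc 1 b) := by
    apply strictMonoOn_of_deriv_pos (convex_Icc 1 b)
    · exact fun x hx => ((hdF2aux n (hbpos x hx)).continuousAt.continuousWithinAt)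
    · intro x hx
      rw [interior_Icc] at hx
      rw [(hdF2aux n (lt_trans one_pos hx.1)).deriv]
      exact hIoopos x hx
  have hF2pos : ∀ x ∈ Ioc (1 : ℝ) b, 0 < F2aux n x := by
    intro x hx
    have := hmono2 (left_mem_Icc.2 hb1.le) ⟨hx.1.le, hx.2⟩ hx.1
    rwa [hF21] at this
  have hmono1 : StrictMonoOn (F1aux n) (Icc 1 b) := by
    apply strictMonoOn_of_deriv_pos (convex_Icc 1 b)
    · exact fun x hx => ((hdF1aux n (hbpos x hx)).continuousAt.continuousWithinAt)
    · intro x hx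
      rw [interior_Icc] at hx
      rw [(hdF1aux n (lt_trans one_pos hx.1)).deriv]
      exact hF2pos x ⟨hx.1, hx.2.le⟩
  have hF1pos : ∀ x ∈ Ioc (1 : ℝ) b, 0 < F1aux n x := by
    intro x hx
    have := hmono1 (left_mem_Icc.2 hb1.le) ⟨hx.1.le, hx.2⟩ hx.1
    rwa [hF11] at this
  have hmono0 : StrictMonoOn α (Icc 1 b) := by
    apply strictMonoOn_of_deriv_pos (convex_Icc 1 b)
    · exact fun x hx => ((hdA x (hbpos x hx)).continuousAt.continuousWithinAt)
    · intro x hx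
      rw [interior_Icc] at hx
      rw [(hdA x (lt_trans one_pos hx.1)).deriv]
      exact hF1pos x ⟨hx.1, hx.2.le⟩
  have hαpos : ∀ x ∈ Ioc (1 : ℝ) b, 0 < α x := by
    intro x hx
    have := hmono0 (left_mem_Icc.2 hb1.le) ⟨hx.1.le, hx.2⟩ hx.1
    rwa [hα1] at this
  -- first zero
  set S : Set ℝ := {k : ℝ | 1 < k ∧ α k ≤ 0} with hSdef
  have hSne : S.Nonempty := by
    obtain ⟨K, hK0, hK1⟩ := ((hbot.eventually (eventually_le_atBot 0)).and
      (eventually_gt_atTop 1)).exists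
    exact ⟨K, hK1, hK0⟩
  have hSbd : BddBelow S := ⟨1, fun s hs => hs.1.le⟩
  set kt : ℝ := sInf S with hktdef
  have hbltS : ∀ s ∈ S, b < s := by
    intro s hs
    by_contra h
    push_neg at h
    exact absurd hs.2 (not_le.2 (hαpos s ⟨hs.1, h⟩))
  have hbk : b ≤ kt := le_csInf hSne fun s hs => (hbltS s hs).le
  have h1k : 1 < kt := lt_of_lt_of_le hb1 hbk
  have hforall : ∀ k : ℝ, 1 < k → k < kt → 0 < α k := by
    intro k h1 h2
    by_contra h
    push_neg at h
    exact absurd (csInf_le hSbd ⟨h1, h⟩) (not_le.2 h2)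
  have hle : α kt ≤ 0 := by
    have hco : ContinuousOn α (Ici b) := fun x hx =>
      ((hdA x (lt_of_lt_of_le (lt_trans one_pos hb1) hx)).continuousAt.continuousWithinAt)
    have hclosed : IsClosed (Ici b ∩ α ⁻¹' Iic 0) :=
      hco.preimage_isClosed_of_isClosed isClosed_Ici isClosed_Iic
    have hsub : S ⊆ Ici b ∩ α ⁻¹' Iic 0 := fun s hs => ⟨(hbltS s hs).le, hs.2⟩
    have hmem : kt ∈ closure S := csInf_mem_closure hSne hSbd
    have : kt ∈ Ici b ∩ α ⁻¹' Iic 0 := by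
      have := closure_mono hsub hmem
      rwa [hclosed.closure_eq] at this
    exact this.2
  have hge : 0 ≤ α kt := by
    have hcont : ContinuousAt α kt := (hdA kt (lt_trans one_pos h1k)).continuousAt
    have hev : ∀ᶠ x in nhdsWithin kt (Iio kt), 0 ≤ α x := by
      filter_upwards [Ioo_mem_nhdsLT_of_mem (⟨h1k, le_rfl⟩ : kt ∈ Ioc 1 kt)] with x hx
      exact (hforall x hx.1 hx.2).le
    exact ge_of_tendsto (hcont.continuousWithinAt.tendsto) hev
  exact ⟨hα1, hd1, hd2, hd3, hpos, hbot, kt, h1k, hforall, le_antisymm hle hge⟩
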